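/- Let n, C, d be positive integers, v ∈ ℝ^n a unit vector, λ > 0, Y ∈ ℝ^{n×C}, and k : ℝ^d → ℝ^n a differentiable map whose derivative is L-Lipschitz, i.e., ‖Dk(x) − Dk(x')‖_op ≤ L‖x − x'‖₂ for all x, x'. Define the NTK feature f^{ker}(x) = λ^{-1} (k(x)ᵀ v) · (Yᵀ v) ∈ ℝ^C. Then for every x ∈ ℝ^d and every perturbation δ ∈ ℝ^d, ‖f^{ker}(x+δ) − f^{ker}(x)‖₂ ≤ λ^{-1} · ‖Yᵀ v‖₂ · ( ‖Dk(x)‖_op · ‖δ‖₂ + (L/2) · ‖δ‖₂² ). In particular, for a fixed perturbation budget ‖δ‖₂ ≤ Δ, the deviation of the NTK feature is bounded by a constant (depending on x, Δ, L, Y, v but not on λ) times 1/λ, so NTK features with larger eigenvalues are more robust to adversarial perturbations. -/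

import Mathlib

open Matrix intervalIntegral

theorem taylor_bound
    {d n : ℕ}
    (k : EuclideanSpace ℝ (Fin d) → EuclideanSpace ℝ (Fin n))
    (hk : Differentiable ℝ k)
    (L : ℝ) (hL0 : 0 ≤ L)
    (hL : ∀ x x', ‖fderiv ℝ k x - fderiv ℝ k x'‖ ≤ L * ‖x - x'‖)
    (x δ : EuclideanSpace ℝ (Fin d)) :
    ‖k (x + δ) - k x - fderiv ℝ k x δ‖ ≤ L / 2 * ‖δ‖ ^ 2 := by
  set D := fderiv ℝ k with hD
  have hDcont : Continuous D := by
    have : LipschitzWith (Real.toNNReal L) D := by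
      apply LipschitzWith.of_dist_le_mul
      intro a b
      simp only [dist_eq_norm]
      calc ‖D a - D b‖ ≤ L * ‖a - b‖ := hL a b
        _ = (Real.toNNReal L : ℝ) * ‖a - b‖ := by rw [Real.coe_toNNReal L hL0]
    exact this.continuous
  have hg : ∀ t : ℝ, HasDerivAt (fun t : ℝ => k (x + t • δ)) (D (x + t • δ) δ) t := by
    intro t
    have h1 : HasDerivAt (fun t : ℝ => x + t • δ) δ t := by
      simpa using ((hasDerivAt_id t).smul_const δ).const_add x
    exact ((hk (x + t • δ)).hasFDerivAt.comp_hasDerivAt t h1)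
  have hcont : Continuous (fun t : ℝ => D (x + t • δ) δ) := by
    exact ((hDcont.comp (by continuity)).clm_apply continuous_const)
  have hint : IntervalIntegrable (fun t : ℝ => D (x + t • δ) δ) MeasureTheory.volume 0 1 :=
    hcont.intervalIntegrable 0 1
  have heq : ∫ t in (0:ℝ)..1, D (x + t • δ) δ = k (x + δ) - k x := by
    have := intervalIntegral.integral_eq_sub_of_hasDerivAt
      (fun t _ => hg t) hint
    simpa using this
  have heq2 : k (x + δ) - k x - D x δ = ∫ t in (0:ℝ)..1, (D (x + t • δ) δ - D x δ) := by
    rw [intervalIntegral.integral_sub hint (intervalIntegrable_const), heq]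
    simp
  rw [heq2]
  have hbound : ∀ t ∈ Set.uIoc (0:ℝ) 1, ‖D (x + t • δ) δ - D x δ‖ ≤ L * t * ‖δ‖ ^ 2 := by
    intro t ht
    rw [Set.uIoc_of_le zero_le_one] at ht
    have ht0 : 0 ≤ t := le_of_lt ht.1
    calc ‖D (x + t • δ) δ - D x δ‖ = ‖(D (x + t • δ) - D x) δ‖ := by simp
      _ ≤ ‖D (x + t • δ) - D x‖ * ‖δ‖ := (D (x + t • δ) - D x).le_opNorm δ
      _ ≤ (L * ‖x + t • δ - x‖) * ‖δ‖ := by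
          exact mul_le_mul_of_nonneg_right (hL _ _) (norm_nonneg δ)
      _ = L * t * ‖δ‖ ^ 2 := by
          rw [add_sub_cancel_left, norm_smul, Real.norm_eq_abs, abs_of_nonneg ht0]; ring
  calc ‖∫ t in (0:ℝ)..1, (D (x + t • δ) δ - D x δ)‖
      ≤ |∫ t in (0:ℝ)..1, L * t * ‖δ‖ ^ 2| := by
        apply intervalIntegral.norm_integral_le_abs_of_norm_le
        · exact (MeasureTheory.ae_restrict_iff' measurableSet_uIoc).2
            (MeasureTheory.ae_of_all _ hbound)
        · exact (Continuous.intervalIntegrable (by continuity) 0 1)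
    _ = L / 2 * ‖δ‖ ^ 2 := by
        have h1 : (∫ t in (0:ℝ)..1, L * t * ‖δ‖ ^ 2) = L / 2 * ‖δ‖ ^ 2 := by
          simp_rw [show ∀ t : ℝ, L * t * ‖δ‖ ^ 2 = (L * ‖δ‖ ^ 2) * t from fun t => by ring]
          rw [integral_const_mul, integral_id]
          ring
        rw [h1, abs_of_nonneg (by positivity)]

theorem ntk_feature_robustness_top_spectrum
    (n C d : ℕ) (hn : 0 < n) (hC : 0 < C) (hd : 0 < d)
    (v : EuclideanSpace ℝ (Fin n)) (hv : ‖v‖ = 1)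
    (lam : ℝ) (hlam : 0 < lam)
    (Y : Matrix (Fin n) (Fin C) ℝ)
    (k : EuclideanSpace ℝ (Fin d) → EuclideanSpace ℝ (Fin n))
    (hk : Differentiable ℝ k)
    (L : ℝ)
    (hL : ∀ x x', ‖fderiv ℝ k x - fderiv ℝ k x'‖ ≤ L * ‖x - x'‖)
    (Yv : EuclideanSpace ℝ (Fin C)) (hYv : ∀ c, Yv c = ∑ i, Y i c * v i)
    (f : EuclideanSpace ℝ (Fin d) → EuclideanSpace ℝ (Fin C))
    (hf : ∀ x, f x = (lam⁻¹ * (inner ℝ (k x) v : ℝ)) • Yv) :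
    (∀ x δ : EuclideanSpace ℝ (Fin d),
        ‖f (x + δ) - f x‖
          ≤ lam⁻¹ * ‖Yv‖ * (‖fderiv ℝ k x‖ * ‖δ‖ + L / 2 * ‖δ‖ ^ 2))
    ∧ (∀ (x : EuclideanSpace ℝ (Fin d)) (Δ : ℝ) (δ : EuclideanSpace ℝ (Fin d)),
        ‖δ‖ ≤ Δ →
        ‖f (x + δ) - f x‖
          ≤ (‖Yv‖ * (‖fderiv ℝ k x‖ * Δ + L / 2 * Δ ^ 2)) / lam) := by
  have hL0 : 0 ≤ L := by
    have h := (norm_nonneg (fderiv ℝ k 0 - fderiv ℝ k (EuclideanSpace.single ⟨0, hd⟩ 1))).trans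
      (hL 0 (EuclideanSpace.single ⟨0, hd⟩ 1))
    simpa [EuclideanSpace.norm_single] using h
  have key : ∀ x δ : EuclideanSpace ℝ (Fin d),
      ‖f (x + δ) - f x‖
        ≤ lam⁻¹ * ‖Yv‖ * (‖fderiv ℝ k x‖ * ‖δ‖ + L / 2 * ‖δ‖ ^ 2) := by
    intro x δ
    have hdiff : f (x + δ) - f x = (lam⁻¹ * (inner ℝ (k (x + δ) - k x) v : ℝ)) • Yv := by
      rw [hf, hf, ← sub_smul, inner_sub_left]
      ring_nf
    have hk_bound : ‖k (x + δ) - k x‖ ≤ ‖fderiv ℝ k x‖ * ‖δ‖ + L / 2 * ‖δ‖ ^ 2 := by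
      have h1 := taylor_bound k hk L hL0 hL x δ
      have h2 : ‖fderiv ℝ k x δ‖ ≤ ‖fderiv ℝ k x‖ * ‖δ‖ := (fderiv ℝ k x).le_opNorm δ
      calc ‖k (x + δ) - k x‖
          ≤ ‖k (x + δ) - k x - fderiv ℝ k x δ‖ + ‖fderiv ℝ k x δ‖ := by
            simpa using norm_add_le (k (x + δ) - k x - fderiv ℝ k x δ) (fderiv ℝ k x δ)
        _ ≤ ‖fderiv ℝ k x‖ * ‖δ‖ + L / 2 * ‖δ‖ ^ 2 := by linarith
    have hinner : |(inner ℝ (k (x + δ) - k x) v : ℝ)| ≤ ‖k (x + δ) - k x‖ := by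
      calc |(inner ℝ (k (x + δ) - k x) v : ℝ)| ≤ ‖k (x + δ) - k x‖ * ‖v‖ :=
            abs_real_inner_le_norm _ _
        _ = ‖k (x + δ) - k x‖ := by rw [hv, mul_one]
    rw [hdiff, norm_smul]
    have hli : 0 ≤ lam⁻¹ := by positivity
    calc ‖lam⁻¹ * (inner ℝ (k (x + δ) - k x) v : ℝ)‖ * ‖Yv‖
        = lam⁻¹ * |(inner ℝ (k (x + δ) - k x) v : ℝ)| * ‖Yv‖ := by
          rw [norm_mul, Real.norm_eq_abs, Real.norm_eq_abs, abs_of_nonneg hli]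
      _ ≤ lam⁻¹ * ‖k (x + δ) - k x‖ * ‖Yv‖ := by
          apply mul_le_mul_of_nonneg_right _ (norm_nonneg Yv)
          exact mul_le_mul_of_nonneg_left hinner hli
      _ ≤ lam⁻¹ * (‖fderiv ℝ k x‖ * ‖δ‖ + L / 2 * ‖δ‖ ^ 2) * ‖Yv‖ := by
          apply mul_le_mul_of_nonneg_right _ (norm_nonneg Yv)
          exact mul_le_mul_of_nonneg_left hk_bound hli
      _ = lam⁻¹ * ‖Yv‖ * (‖fderiv ℝ k x‖ * ‖δ‖ + L / 2 * ‖δ‖ ^ 2) := by ring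
  refine ⟨key, ?_⟩
  intro x Δ δ hδ
  have h1 := key x δ
  have h2 : ‖fderiv ℝ k x‖ * ‖δ‖ + L / 2 * ‖δ‖ ^ 2 ≤ ‖fderiv ℝ k x‖ * Δ + L / 2 * Δ ^ 2 := by
    have h3 : ‖δ‖ ^ 2 ≤ Δ ^ 2 := by nlinarith [norm_nonneg δ]
    nlinarith [norm_nonneg (fderiv ℝ k x), norm_nonneg δ]
  have hli : 0 ≤ lam⁻¹ := by positivity
  calc ‖f (x + δ) - f x‖ ≤ lam⁻¹ * ‖Yv‖ * (‖fderiv ℝ k x‖ * ‖δ‖ + L / 2 * ‖δ‖ ^ 2) := h1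
    _ ≤ lam⁻¹ * ‖Yv‖ * (‖fderiv ℝ k x‖ * Δ + L / 2 * Δ ^ 2) := by
        apply mul_le_mul_of_nonneg_left h2 (by positivity)
    _ = (‖Yv‖ * (‖fderiv ℝ k x‖ * Δ + L / 2 * Δ ^ 2)) / lam := by
        rw [div_eq_mul_inv]; ring
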